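/- For every point x of a compact metric space X, every continuous map f : X → X, every ε > 0 and every positive integer n, the following inequalities hold for all positive integers h: ((n+h)/n)² · C_m(x, n+h, ε) − (2hn + h²)/n² ≤ C_m(f^h(x), n, ε) ≤ ((n+h)/n)² · C_m(x, n+h, ε). -/

import Mathlib

open Filter Metric Set
open scoped Classical

namespace RQA

variable {X : Type*} [MetricSpace X]

/-- Correlation sum `C_m(x,n,ε)` with respect to the Bowen metric `ρ_m`:
`ρ_m(f^[i] x, f^[j] x) ≤ ε ↔ ∀ k < m, dist (f^[i+k] x) (f^[j+k] x) ≤ ε`. -/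
noncomputable def corrSum (f : X → X) (x : X) (m n : ℕ) (ε : ℝ) : ℝ :=
  (((Finset.range n ×ˢ Finset.range n).filter
      (fun p => ∀ k < m, dist (f^[p.1 + k] x) (f^[p.2 + k] x) ≤ ε)).card : ℝ) / (n : ℝ) ^ 2

/-- Correlation sum `C_∞(x,n,ε)` with respect to the metric `ρ_∞`. -/
noncomputable def corrSumInf (f : X → X) (x : X) (n : ℕ) (ε : ℝ) : ℝ :=
  (((Finset.range n ×ˢ Finset.range n).filter
      (fun p => ∀ k : ℕ, dist (f^[p.1 + k] x) (f^[p.2 + k] x) ≤ ε)).card : ℝ) / (n : ℝ) ^ 2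

/-- Lower asymptotic correlation sum `C̲_m(x,ε)`. -/
noncomputable def lowerCorr (f : X → X) (x : X) (m : ℕ) (ε : ℝ) : ℝ :=
  liminf (fun n => corrSum f x m n ε) atTop

/-- Upper asymptotic correlation sum `C̄_m(x,ε)`. -/
noncomputable def upperCorr (f : X → X) (x : X) (m : ℕ) (ε : ℝ) : ℝ :=
  limsup (fun n => corrSum f x m n ε) atTop

/-- Recurrence `m`-determinism `DET_m(x,n,ε) = C_m(x,n,ε)/C_1(x,n,ε)`. -/
noncomputable def detSum (f : X → X) (x : X) (m n : ℕ) (ε : ℝ) : ℝ :=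
  corrSum f x m n ε / corrSum f x 1 n ε

/-- Recurrence `∞`-determinism `DET_∞(x,n,ε) = C_∞(x,n,ε)/C_1(x,n,ε)`. -/
noncomputable def detSumInf (f : X → X) (x : X) (n : ℕ) (ε : ℝ) : ℝ :=
  corrSumInf f x n ε / corrSum f x 1 n ε

/-- Lower asymptotic recurrence determinism `DET̲_m(x,ε)`. -/
noncomputable def lowerDet (f : X → X) (x : X) (m : ℕ) (ε : ℝ) : ℝ :=
  liminf (fun n => detSum f x m n ε) atTop

/-- Upper asymptotic recurrence determinism `DET̄_m(x,ε)`. -/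
noncomputable def upperDet (f : X → X) (x : X) (m : ℕ) (ε : ℝ) : ℝ :=
  limsup (fun n => detSum f x m n ε) atTop

/-- `C̄_∞(x,ε) = lim_m C̄_m(x,ε)`; since `m ↦ C̄_m(x,ε)` is non-increasing,
the limit equals the infimum over `m ≥ 1`. -/
noncomputable def upperCorrInf (f : X → X) (x : X) (ε : ℝ) : ℝ :=
  ⨅ m : ℕ, upperCorr f x (m + 1) ε

/-- `C̲_∞(x,ε) = lim_m C̲_m(x,ε)` (a limit of a non-increasing sequence). -/
noncomputable def lowerCorrInf (f : X → X) (x : X) (ε : ℝ) : ℝ :=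
  ⨅ m : ℕ, lowerCorr f x (m + 1) ε

/-- `DET̄_∞(x,ε) = lim_m DET̄_m(x,ε)` (a limit of a non-increasing sequence). -/
noncomputable def upperDetInf (f : X → X) (x : X) (ε : ℝ) : ℝ :=
  ⨅ m : ℕ, upperDet f x (m + 1) ε

/-- `DET̲_∞(x,ε) = lim_m DET̲_m(x,ε)` (a limit of a non-increasing sequence). -/
noncomputable def lowerDetInf (f : X → X) (x : X) (ε : ℝ) : ℝ :=
  ⨅ m : ℕ, lowerDet f x (m + 1) ε

/-- The ω-limit set of `x`: the set of limit points of the trajectory `(f^[n] x)`. -/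
def omegaSet (f : X → X) (x : X) : Set X :=
  {y | ∃ φ : ℕ → ℕ, StrictMono φ ∧ Tendsto (fun n => f^[φ n] x) atTop (nhds y)}

/-- Distance between two subsets of `ℝ`. -/
noncomputable def setDist (A B : Set ℝ) : ℝ :=
  sInf {d | ∃ a ∈ A, ∃ b ∈ B, d = dist a b}

/-- The binary word of length `t` given by the binary digits of `n`
(the 2-adic encoding, least significant digit first; addition of integers to
words is addition with carry from left to right, i.e. ordinary addition of the
encoded values modulo `2^t`). -/
def word (t n : ℕ) : Fin t → Bool := fun i => n.testBit i.val

/-- The value `∑ w_i 2^i` of a binary word under the 2-adic encoding. -/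
def encodeWord {t : ℕ} (w : Fin t → Bool) : ℕ :=
  ∑ i : Fin t, if w i then 2 ^ i.val else 0

end RQA

open RQA

/-- elementary inequalities between `C_m(f^h(x), n, ε)` and
`C_m(x, n+h, ε)`. -/
theorem stmt_1 {X : Type*} [MetricSpace X] [CompactSpace X]
    (f : X → X) (hf : Continuous f) (x : X) (ε : ℝ) (hε : 0 < ε)
    (m : ℕ) (hm : 0 < m) (n : ℕ) (hn : 0 < n) :
    ∀ h : ℕ, 0 < h →
      ((n + h : ℝ) / n) ^ 2 * corrSum f x m (n + h) ε
          - (2 * h * n + h ^ 2) / (n : ℝ) ^ 2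
        ≤ corrSum f (f^[h] x) m n ε ∧
      corrSum f (f^[h] x) m n ε ≤ ((n + h : ℝ) / n) ^ 2 * corrSum f x m (n + h) ε := by
  intro h hh
  classical
  set A := (Finset.range (n + h) ×ˢ Finset.range (n + h)).filter
      (fun p : ℕ × ℕ => ∀ k < m, dist (f^[p.1 + k] x) (f^[p.2 + k] x) ≤ ε) with hA
  set B := (Finset.range n ×ˢ Finset.range n).filter
      (fun p : ℕ × ℕ => ∀ k < m, dist (f^[p.1 + k] (f^[h] x)) (f^[p.2 + k] (f^[h] x)) ≤ ε)
      with hB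
  have hBtoA : ∀ p : ℕ × ℕ, p ∈ B → (p.1 + h, p.2 + h) ∈ A := by
    intro p hp
    simp only [hB, hA, Finset.mem_filter, Finset.mem_product, Finset.mem_range] at hp ⊢
    refine ⟨⟨by omega, by omega⟩, fun k hk => ?_⟩
    have heq : ∀ i : ℕ, f^[i] (f^[h] x) = f^[i + h] x :=
      fun i => (Function.iterate_add_apply f i h x).symm
    have := hp.2 k hk
    rw [heq, heq] at this
    have e1 : p.1 + h + k = p.1 + k + h := by omega
    have e2 : p.2 + h + k = p.2 + k + h := by omega
    rw [e1, e2]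
    exact this
  have key1 : B.card ≤ A.card := by
    apply Finset.card_le_card_of_injOn (fun p => (p.1 + h, p.2 + h)) (fun p hp => hBtoA p hp)
    intro p _ q _ hpq
    simp only [Prod.mk.injEq] at hpq
    exact Prod.ext (by omega) (by omega)
  have key2 : A.card ≤ B.card + (2 * h * n + h ^ 2) := by
    have hsub : A ⊆ B.image (fun p => (p.1 + h, p.2 + h)) ∪
        ((Finset.range (n + h) ×ˢ Finset.range (n + h)) \
          (Finset.Ico h (n + h) ×ˢ Finset.Ico h (n + h))) := by
      intro p hp
      simp only [hA, Finset.mem_filter, Finset.mem_product, Finset.mem_range] at hp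
      by_cases hp1 : h ≤ p.1 ∧ h ≤ p.2
      · apply Finset.mem_union_left
        rw [Finset.mem_image]
        refine ⟨(p.1 - h, p.2 - h), ?_, by simp; exact Prod.ext (by omega) (by omega)⟩
        simp only [hB, Finset.mem_filter, Finset.mem_product, Finset.mem_range]
        refine ⟨⟨by omega, by omega⟩, fun k hk => ?_⟩
        have heq : ∀ i : ℕ, f^[i] (f^[h] x) = f^[i + h] x :=
          fun i => (Function.iterate_add_apply f i h x).symm
        have := hp.2 k hk
        rw [heq, heq]
        have e1 : p.1 + k = (p.1 - h) + k + h := by omega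
        have e2 : p.2 + k = (p.2 - h) + k + h := by omega
        rw [e1, e2] at this
        exact this
      · apply Finset.mem_union_right
        simp only [Finset.mem_sdiff, Finset.mem_product, Finset.mem_range, Finset.mem_Ico]
        exact ⟨⟨hp.1.1, hp.1.2⟩, by omega⟩
    have hcard := Finset.card_le_card hsub
    have h1 : (B.image (fun p : ℕ × ℕ => (p.1 + h, p.2 + h))).card ≤ B.card :=
      Finset.card_image_le
    have h2 : ((Finset.range (n + h) ×ˢ Finset.range (n + h)) \
        (Finset.Ico h (n + h) ×ˢ Finset.Ico h (n + h))).card = 2 * h * n + h ^ 2 := by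
      rw [Finset.card_sdiff, Finset.inter_eq_left.mpr ?_]
      · simp only [Finset.card_product, Finset.card_range, Nat.card_Ico]
        have e : (n + h) * (n + h) = (n + h - h) * (n + h - h) + (2 * h * n + h ^ 2) := by
          have : n + h - h = n := by omega
          rw [this]; ring
        omega
      · intro p hp
        simp only [Finset.mem_product, Finset.mem_Ico, Finset.mem_range] at hp ⊢
        omega
    calc A.card ≤ _ + _ := hcard.trans (Finset.card_union_le _ _)
    _ ≤ B.card + (2 * h * n + h ^ 2) := by omega
  have hn' : (0:ℝ) < (n:ℝ) := by exact_mod_cast hn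
  have hnh : (0:ℝ) < ((n:ℝ) + (h:ℝ)) := by positivity
  have hCA : corrSum f x m (n + h) ε = (A.card : ℝ) / ((n:ℝ) + (h:ℝ)) ^ 2 := by
    rw [corrSum, hA]; push_cast; ring_nf
  have hCB : corrSum f (f^[h] x) m n ε = (B.card : ℝ) / (n:ℝ) ^ 2 := by
    rw [corrSum, hB]
  have hfrac : ((n + h : ℝ) / n) ^ 2 * corrSum f x m (n + h) ε = (A.card : ℝ) / (n:ℝ) ^ 2 := by
    rw [hCA]; field_simp
  have k1 : (B.card : ℝ) ≤ (A.card : ℝ) := by exact_mod_cast key1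
  have k2 : (A.card : ℝ) ≤ (B.card : ℝ) + (2 * (h:ℝ) * (n:ℝ) + (h:ℝ) ^ 2) := by
    exact_mod_cast key2
  constructor
  · rw [hfrac, hCB, ← sub_div]
    gcongr ?_ / _
    push_cast
    linarith
  · rw [hfrac, hCB]
    gcongr ?_ / _
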